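/- For every k ≥ 3, there exist a finite simple undirected connected graph G_0 and a finite sequence G_0, G_1, …, G_T with T ≥ 1 and G_T = G_0 (as labeled graphs on the same vertex set) in which each G_{t+1} is obtained from G_t by a single edge swap performed by a player that is pessimistically unhappy in G_t with respect to the SUM-cost with k-local information via that swap; the same statement holds with respect to the MAX-cost. In particular, starting from a general (non-tree) graph, the SUM swap game and the MAX swap game by pessimistic players with k-local information admit best response cycles. -/

import Mathlib

open SimpleGraph

namespace SwapGame

/-- The set of vertices within distance `k` of `u` in `G` (the `k`-neighborhood). -/
def ball {V : Type} (G : SimpleGraph V) (u : V) (k : ℕ) : Set V :=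
  {v | G.edist u v ≤ (k : ℕ∞)}

/-- The graph obtained from `G` by the edge swap `(v, w)` at `u`:
remove the edge `{u, v}` and add the edge `{u, w}`. -/
def swapGraph {V : Type} (G : SimpleGraph V) (u v w : V) : SimpleGraph V :=
  SimpleGraph.fromEdgeSet ((G.edgeSet \ {s(u, v)}) ∪ {s(u, w)})

/-- The edge swap `(v, w)` at `u` is a legal move for a player with `k`-local information:
`v` is a neighbor of `u` and `w` is a non-neighbor (other than `u`) within distance `k`. -/
def ValidSwap {V : Type} (G : SimpleGraph V) (k : ℕ) (u v w : V) : Prop :=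
  G.Adj u v ∧ G.edist u w ≤ (k : ℕ∞) ∧ ¬ G.Adj u w ∧ w ≠ u

/-- `H` (a graph on `W`, with `ι` identifying the view inside `H`) is a finite connected
graph compatible with `u`'s `k`-local view in `G`. -/
def Compatible {V : Type} (G : SimpleGraph V) (k : ℕ) (u : V)
    {W : Type} (H : SimpleGraph W) (ι : V → W) : Prop :=
  Finite W ∧ H.Connected ∧ Set.InjOn ι (ball G u k) ∧
  {x : W | H.edist (ι u) x ≤ (k : ℕ∞)} = ι '' ball G u k ∧
  ∀ a ∈ ball G u k, ∀ b ∈ ball G u k, (H.Adj (ι a) (ι b) ↔ G.Adj a b)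

/-- SUM-cost of player `u` in `H` (`⊤` when `H` is disconnected). -/
noncomputable def cSum {W : Type} (H : SimpleGraph W) (u : W) : ℕ∞ :=
  ∑' v, H.edist u v

/-- MAX-cost (eccentricity) of player `u` in `H` (`⊤` when `H` is disconnected). -/
noncomputable def cMax {W : Type} (H : SimpleGraph W) (u : W) : ℕ∞ :=
  ⨆ v, H.edist u v

/-- A pessimistic player `u` with `k`-local information is unhappy in `G` w.r.t. the
SUM-cost via the edge swap `(v, w)`: the swap strictly decreases `u`'s cost in every
compatible global graph. -/
def UnhappySumVia {V : Type} (G : SimpleGraph V) (k : ℕ) (u v w : V) : Prop :=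
  ValidSwap G k u v w ∧
  ∀ (W : Type) (H : SimpleGraph W) (ι : V → W), Compatible G k u H ι →
    cSum (swapGraph H (ι u) (ι v) (ι w)) (ι u) < cSum H (ι u)

/-- Pessimistic unhappiness w.r.t. the MAX-cost via the edge swap `(v, w)`. -/
def UnhappyMaxVia {V : Type} (G : SimpleGraph V) (k : ℕ) (u v w : V) : Prop :=
  ValidSwap G k u v w ∧
  ∀ (W : Type) (H : SimpleGraph W) (ι : V → W), Compatible G k u H ι →
    cMax (swapGraph H (ι u) (ι v) (ι w)) (ι u) < cMax H (ι u)

/-- Weakly pessimistic unhappiness w.r.t. the SUM-cost via the edge swap `(v, w)`: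
the swap does not increase `u`'s cost in any compatible global graph. -/
def WeakUnhappySumVia {V : Type} (G : SimpleGraph V) (k : ℕ) (u v w : V) : Prop :=
  ValidSwap G k u v w ∧
  ∀ (W : Type) (H : SimpleGraph W) (ι : V → W), Compatible G k u H ι →
    cSum (swapGraph H (ι u) (ι v) (ι w)) (ι u) ≤ cSum H (ι u)

/-- Weakly pessimistic unhappiness w.r.t. the MAX-cost via the edge swap `(v, w)`. -/
def WeakUnhappyMaxVia {V : Type} (G : SimpleGraph V) (k : ℕ) (u v w : V) : Prop :=
  ValidSwap G k u v w ∧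
  ∀ (W : Type) (H : SimpleGraph W) (ι : V → W), Compatible G k u H ι →
    cMax (swapGraph H (ι u) (ι v) (ι w)) (ι u) ≤ cMax H (ι u)

/-- Optimistic unhappiness w.r.t. the SUM-cost via the edge swap `(v, w)`:
the swap strictly decreases `u`'s cost in some compatible global graph
(with the swapped graph connected). -/
def OptUnhappySumVia {V : Type} (G : SimpleGraph V) (k : ℕ) (u v w : V) : Prop :=
  ValidSwap G k u v w ∧
  ∃ (W : Type) (H : SimpleGraph W) (ι : V → W), Compatible G k u H ι ∧
    (swapGraph H (ι u) (ι v) (ι w)).Connected ∧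
    cSum (swapGraph H (ι u) (ι v) (ι w)) (ι u) < cSum H (ι u)

/-- Optimistic unhappiness w.r.t. the MAX-cost via the edge swap `(v, w)`. -/
def OptUnhappyMaxVia {V : Type} (G : SimpleGraph V) (k : ℕ) (u v w : V) : Prop :=
  ValidSwap G k u v w ∧
  ∃ (W : Type) (H : SimpleGraph W) (ι : V → W), Compatible G k u H ι ∧
    (swapGraph H (ι u) (ι v) (ι w)).Connected ∧
    cMax (swapGraph H (ι u) (ι v) (ι w)) (ι u) < cMax H (ι u)

/-- Sum-swap equilibrium for pessimistic players with `k`-local information. -/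
def SumEquilibrium {V : Type} (G : SimpleGraph V) (k : ℕ) : Prop :=
  ∀ u : V, ¬ ∃ v w, UnhappySumVia G k u v w

/-- Max-swap equilibrium for pessimistic players with `k`-local information. -/
def MaxEquilibrium {V : Type} (G : SimpleGraph V) (k : ℕ) : Prop :=
  ∀ u : V, ¬ ∃ v w, UnhappyMaxVia G k u v w

/-- Sum-swap equilibrium for weakly pessimistic players with `k`-local information. -/
def WeakSumEquilibrium {V : Type} (G : SimpleGraph V) (k : ℕ) : Prop :=
  ∀ u : V, ¬ ∃ v w, WeakUnhappySumVia G k u v w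

/-- Max-swap equilibrium for weakly pessimistic players with `k`-local information. -/
def WeakMaxEquilibrium {V : Type} (G : SimpleGraph V) (k : ℕ) : Prop :=
  ∀ u : V, ¬ ∃ v w, WeakUnhappyMaxVia G k u v w

/-- Sum-swap equilibrium for optimistic players with `k`-local information. -/
def OptSumEquilibrium {V : Type} (G : SimpleGraph V) (k : ℕ) : Prop :=
  ∀ u : V, ¬ ∃ v w, OptUnhappySumVia G k u v w

/-- Max-swap equilibrium for optimistic players with `k`-local information. -/
def OptMaxEquilibrium {V : Type} (G : SimpleGraph V) (k : ℕ) : Prop :=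
  ∀ u : V, ¬ ∃ v w, OptUnhappyMaxVia G k u v w

/-- Social SUM-cost of a (connected, finite) graph, as a natural number. -/
noncomputable def scSum {W : Type} [Fintype W] (H : SimpleGraph W) : ℕ :=
  ∑ u : W, ∑ v : W, H.dist u v

/-- Social MAX-cost of a (connected, finite) graph, as a natural number. -/
noncomputable def scMax {W : Type} [Fintype W] (H : SimpleGraph W) : ℕ :=
  ∑ u : W, Finset.univ.sup (H.dist u)

/-- Price of anarchy over `n`-vertex trees for a given notion of equilibrium and
social cost: (max social cost of an equilibrium tree) / (min social cost of a tree). -/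
noncomputable def PoA (n : ℕ) (eqPred : SimpleGraph (Fin n) → Prop)
    (sc : SimpleGraph (Fin n) → ℕ) : ℚ :=
  ((sSup {m : ℕ | ∃ T : SimpleGraph (Fin n), T.IsTree ∧ eqPred T ∧ sc T = m} : ℕ) : ℚ) /
  ((sInf {m : ℕ | ∃ T : SimpleGraph (Fin n), T.IsTree ∧ sc T = m} : ℕ) : ℚ)

lemma edist_le_one' {V : Type} {G : SimpleGraph V} {a b : V} (h : G.Adj a b) :
    G.edist a b ≤ 1 := (edist_eq_one_iff_adj.mpr h).le

lemma edist_map_le {V W : Type} {G : SimpleGraph V} {H : SimpleGraph W} (f : V → W)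
    (hf : ∀ a b, G.Adj a b → H.Adj (f a) (f b)) (a b : V) :
    H.edist (f a) (f b) ≤ G.edist a b := by
  by_cases hr : G.Reachable a b
  · obtain ⟨p, hp⟩ := hr.exists_walk_length_eq_edist
    rw [← hp, ← SimpleGraph.Walk.length_map (f := ⟨f, fun h => hf _ _ h⟩) (p := p)]
    exact edist_le _
  · rw [edist_eq_top_of_not_reachable hr]; exact le_top

lemma swapGraph_adj {V : Type} (G : SimpleGraph V) (u v w a c : V) :
    (swapGraph G u v w).Adj a c ↔
      ((G.Adj a c ∧ s(a, c) ≠ s(u, v)) ∨ s(a, c) = s(u, w)) ∧ a ≠ c := by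
  simp only [swapGraph, fromEdgeSet_adj, Set.mem_union, Set.mem_diff, Set.mem_singleton_iff,
    mem_edgeSet]

/-- The core comparison lemma: under the stated local conditions, the swap strictly
decreases both the SUM-cost and the MAX-cost in every compatible global graph. -/
lemma coreLemma {V : Type} [Fintype V] [DecidableEq V] (G : SimpleGraph V) (k : ℕ)
    (hk : 3 ≤ k) (u v w b : V)
    (hG3 : ∀ a, G.edist u a ≤ 3)
    (hG'2 : ∀ a, (swapGraph G u v w).edist u a ≤ 2)
    (hb : G.edist u b = 3)
    (hsum : ∑ a, (swapGraph G u v w).edist u a < ∑ a, G.edist u a)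
    {W : Type} (H : SimpleGraph W) (ι : V → W)
    (hc : Compatible G k u H ι) :
    cSum (swapGraph H (ι u) (ι v) (ι w)) (ι u) < cSum H (ι u) ∧
    cMax (swapGraph H (ι u) (ι v) (ι w)) (ι u) < cMax H (ι u) := by
  classical
  obtain ⟨hfin, hconn, hinjOn, hballW, hadj⟩ := hc
  have := Fintype.ofFinite W
  have k3 : (3 : ℕ∞) ≤ (k : ℕ∞) := by exact_mod_cast hk
  have hballV : ball G u k = Set.univ := by
    ext a
    simp only [ball, Set.mem_setOf_eq, Set.mem_univ, iff_true]
    exact (hG3 a).trans k3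
  have hinj : Function.Injective ι := fun a b h =>
    hinjOn (by rw [hballV]; trivial) (by rw [hballV]; trivial) h
  have hrange : {x : W | H.edist (ι u) x ≤ (k : ℕ∞)} = Set.range ι := by
    rw [hballW, hballV, Set.image_univ]
  have hadj' : ∀ a b : V, H.Adj (ι a) (ι b) ↔ G.Adj a b := fun a b =>
    hadj a (by rw [hballV]; trivial) b (by rw [hballV]; trivial)
  -- distances in H between image vertices agree with G
  have hHle : ∀ a c : V, H.edist (ι a) (ι c) ≤ G.edist a c :=
    edist_map_le ι (fun a c h => (hadj' a c).mpr h)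
  -- pullback of distances
  have hpull : ∀ d : ℕ, (d : ℕ∞) ≤ (k : ℕ∞) → ∀ x : W, H.edist (ι u) x = d →
      ∃ a : V, x = ι a ∧ G.edist u a ≤ d := by
    intro d
    induction d using Nat.strong_induction_on with
    | _ d IH =>
      intro hdk x hx
      have hxr : x ∈ Set.range ι := by
        rw [← hrange]; simp only [Set.mem_setOf_eq]; rw [hx]; exact hdk
      obtain ⟨a, rfl⟩ := hxr
      refine ⟨a, rfl, ?_⟩
      match d, hx, hdk with
      | 0, hx, _ =>
        have h0 : H.edist (ι u) (ι a) = 0 := by exact_mod_cast hx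
        have huv2 : ι u = ι a := edist_eq_zero_iff.mp h0
        have : u = a := hinj huv2
        subst this
        simp
      | (m+1), hx, hdk =>
        have hne : H.edist (ι u) (ι a) ≠ ⊤ := by rw [hx]; exact ENat.coe_ne_top _
        obtain ⟨p, hp⟩ := exists_walk_of_edist_ne_top hne
        have hplen : p.reverse.length = m + 1 := by
          rw [SimpleGraph.Walk.length_reverse]
          exact_mod_cast hp.trans hx
        have hneq : (ι a) ≠ (ι u) := by
          intro h
          rw [h] at hx
          simp only [edist_self] at hx
          have : (0:ℕ) = m + 1 := by exact_mod_cast hx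
          omega
        obtain ⟨y, hxy, q, hcons⟩ := SimpleGraph.Walk.exists_eq_cons_of_ne hneq p.reverse
        · have hql : q.length = m := by
            rw [hcons] at hplen; simpa using hplen
          have hyle : H.edist (ι u) y ≤ (m : ℕ∞) := by
            rw [SimpleGraph.edist_comm]
            exact (edist_le q).trans (by rw [hql])
          have hyne : H.edist (ι u) y ≠ ⊤ := fun h => by simp [h] at hyle
          lift H.edist (ι u) y to ℕ using hyne with d' hd'
          have hd'm : d' ≤ m := by exact_mod_cast hyle
          have hd'k : (d' : ℕ∞) ≤ (k : ℕ∞) := by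
            refine le_trans ?_ hdk
            exact_mod_cast Nat.le_succ_of_le hd'm
          obtain ⟨c, rfl, hc⟩ := IH d' (by omega) hd'k y hd'.symm
          have hadjac : G.Adj c a := (hadj' c a).mp hxy.symm
          calc G.edist u a ≤ G.edist u c + G.edist c a := SimpleGraph.edist_triangle
            _ ≤ (d' : ℕ∞) + 1 := add_le_add hc (edist_le_one' hadjac)
            _ ≤ (m : ℕ∞) + 1 := by
                exact_mod_cast add_le_add_left (by exact_mod_cast hd'm : (d':ℕ∞) ≤ m) 1
            _ = ((m+1 : ℕ) : ℕ∞) := by push_cast; ring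
  have hGle : ∀ a : V, G.edist u a ≤ H.edist (ι u) (ι a) := by
    intro a
    have h3 : H.edist (ι u) (ι a) ≤ 3 := (hHle u a).trans (hG3 a)
    have hne : H.edist (ι u) (ι a) ≠ ⊤ := fun h => by simp [h] at h3
    lift H.edist (ι u) (ι a) to ℕ using hne with d hd
    obtain ⟨c, hca, hc⟩ := hpull d (le_trans (by exact_mod_cast h3) k3) (ι a) hd.symm
    rw [← hinj hca] at hc
    exact hc
  have hHeq : ∀ a : V, H.edist (ι u) (ι a) = G.edist u a :=
    fun a => le_antisymm (hHle u a) (hGle a)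
  -- homomorphism property for the swapped graphs
  have hadjswap : ∀ a c : V, (swapGraph G u v w).Adj a c → (swapGraph H (ι u) (ι v) (ι w)).Adj (ι a) (ι c) := by
    intro a c h
    rw [swapGraph_adj] at h
    rw [swapGraph_adj]
    obtain ⟨hmem, hne⟩ := h
    refine ⟨?_, fun h => hne (hinj h)⟩
    rcases hmem with ⟨hmem, hnuv⟩ | heq
    · left
      refine ⟨(hadj' a c).mpr hmem, ?_⟩
      intro hcon
      apply hnuv
      rw [Sym2.eq_iff] at hcon ⊢
      rcases hcon with ⟨h1, h2⟩ | ⟨h1, h2⟩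
      · exact Or.inl ⟨hinj h1, hinj h2⟩
      · exact Or.inr ⟨hinj h1, hinj h2⟩
    · right
      rw [Sym2.eq_iff] at heq ⊢
      rcases heq with ⟨h1, h2⟩ | ⟨h1, h2⟩
      · exact Or.inl ⟨congrArg ι h1, congrArg ι h2⟩
      · exact Or.inr ⟨congrArg ι h1, congrArg ι h2⟩
  have hH'le : ∀ a : V, (swapGraph H (ι u) (ι v) (ι w)).edist (ι u) (ι a) ≤ (swapGraph G u v w).edist u a :=
    fun a => edist_map_le ι hadjswap u a
  have hH'2 : ∀ a : V, (swapGraph H (ι u) (ι v) (ι w)).edist (ι u) (ι a) ≤ 2 := fun a => (hH'le a).trans (hG'2 a)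
  have hfinH : ∀ x : W, H.edist (ι u) x ≠ ⊤ :=
    fun x => edist_ne_top_iff_reachable.mpr (hconn (ι u) x)
  -- the key pointwise estimate
  have hP : ∀ x : W, (swapGraph H (ι u) (ι v) (ι w)).edist (ι u) x ≤ 2 ∨ (swapGraph H (ι u) (ι v) (ι w)).edist (ι u) x + 1 ≤ H.edist (ι u) x := by
    have main : ∀ d : ℕ, ∀ x : W, H.edist (ι u) x = d →
        ((swapGraph H (ι u) (ι v) (ι w)).edist (ι u) x ≤ 2 ∨ (swapGraph H (ι u) (ι v) (ι w)).edist (ι u) x + 1 ≤ (d : ℕ∞)) := by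
      intro d
      induction d using Nat.strong_induction_on with
      | _ d IH =>
        intro x hx
        by_cases hxk : (d : ℕ∞) ≤ (k : ℕ∞)
        · have hxr : x ∈ Set.range ι := by
            rw [← hrange]; simp only [Set.mem_setOf_eq]; rw [hx]; exact hxk
          obtain ⟨a, rfl⟩ := hxr
          exact Or.inl (hH'2 a)
        · have hdk : k < d := by
            by_contra hcon
            exact hxk (by exact_mod_cast Nat.not_lt.mp hcon)
          have hd4 : 4 ≤ d := by omega
          have hnetop : H.edist (ι u) x ≠ ⊤ := hfinH x
          obtain ⟨p, hp⟩ := exists_walk_of_edist_ne_top hnetop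
          have hplen : p.reverse.length = d := by
            rw [SimpleGraph.Walk.length_reverse]
            exact_mod_cast hp.trans hx
          have hneq : x ≠ (ι u) := by
            intro h
            rw [h] at hx
            simp only [SimpleGraph.edist_self] at hx
            have : d = 0 := by exact_mod_cast hx.symm
            omega
          obtain ⟨y, hxy, q, hcons⟩ := SimpleGraph.Walk.exists_eq_cons_of_ne hneq p.reverse
          · have hql : q.length = d - 1 := by
              rw [hcons] at hplen
              simp only [SimpleGraph.Walk.length_cons] at hplen
              omega
            have hyle : H.edist (ι u) y ≤ ((d - 1 : ℕ) : ℕ∞) := by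
              rw [SimpleGraph.edist_comm]
              exact (edist_le q).trans (by rw [hql])
            have hyne : H.edist (ι u) y ≠ ⊤ := fun h => by simp [h] at hyle
            lift H.edist (ι u) y to ℕ using hyne with d' hd'
            have hd'm : d' ≤ d - 1 := by exact_mod_cast hyle
            have hIH := IH d' (by omega) y hd'.symm
            -- the edge y-x survives the swap
            have hxneu : x ≠ ι u := hneq
            have hxnotim : x ∉ Set.range ι := by
              rw [← hrange]
              simp only [Set.mem_setOf_eq]
              rw [hx]
              intro hcon
              exact hxk hcon
            have hedge : (swapGraph H (ι u) (ι v) (ι w)).Adj y x := by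
              rw [swapGraph_adj]
              refine ⟨Or.inl ⟨hxy.symm, ?_⟩, hxy.ne'⟩
              intro hcon
              rw [Sym2.eq_iff] at hcon
              rcases hcon with ⟨h1, h2⟩ | ⟨h1, h2⟩
              · exact hxnotim ⟨v, h2.symm⟩
              · exact hxneu h2
            have hstep : (swapGraph H (ι u) (ι v) (ι w)).edist (ι u) x ≤ (swapGraph H (ι u) (ι v) (ι w)).edist (ι u) y + 1 :=
              calc (swapGraph H (ι u) (ι v) (ι w)).edist (ι u) x ≤ (swapGraph H (ι u) (ι v) (ι w)).edist (ι u) y + (swapGraph H (ι u) (ι v) (ι w)).edist y x :=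
                    SimpleGraph.edist_triangle
                _ ≤ (swapGraph H (ι u) (ι v) (ι w)).edist (ι u) y + 1 := add_le_add_right (edist_le_one' hedge) _
            rcases hIH with h2 | hsucc
            · right
              calc (swapGraph H (ι u) (ι v) (ι w)).edist (ι u) x + 1 ≤ (2 + 1) + 1 :=
                    add_le_add_left (hstep.trans (add_le_add_left h2 1)) 1
                _ = (4 : ℕ∞) := by norm_num
                _ ≤ (d : ℕ∞) := by exact_mod_cast hd4
            · right
              have : (swapGraph H (ι u) (ι v) (ι w)).edist (ι u) x ≤ (d' : ℕ∞) := hstep.trans hsucc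
              calc (swapGraph H (ι u) (ι v) (ι w)).edist (ι u) x + 1 ≤ (d' : ℕ∞) + 1 := add_le_add_left this 1
                _ ≤ ((d - 1 : ℕ) : ℕ∞) + 1 := by
                    exact add_le_add_left (by exact_mod_cast hd'm) 1
                _ = (d : ℕ∞) := by
                    have h1 : d - 1 + 1 = d := by omega
                    exact_mod_cast congrArg (Nat.cast : ℕ → ℕ∞) h1
    intro x
    have hne := hfinH x
    lift H.edist (ι u) x to ℕ using hne with d hd
    exact main d x hd.symm
  constructor
  · -- SUM
    have htsum : cSum H (ι u) = ∑ x : W, H.edist (ι u) x := tsum_fintype _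
    have htsum' : cSum (swapGraph H (ι u) (ι v) (ι w)) (ι u) = ∑ x : W, (swapGraph H (ι u) (ι v) (ι w)).edist (ι u) x := tsum_fintype _
    rw [htsum, htsum']
    have hsplit : ∀ f : W → ℕ∞, ∑ x : W, f x =
        ∑ x ∈ Finset.univ.filter (· ∈ Set.range ι), f x +
        ∑ x ∈ Finset.univ.filter (¬ · ∈ Set.range ι), f x :=
      fun f => (Finset.sum_filter_add_sum_filter_not _ _ _).symm
    have himg : Finset.univ.image ι = Finset.univ.filter (· ∈ Set.range ι) := by
      ext x
      simp [Set.mem_range, eq_comm]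
    have himgsum : ∀ f : W → ℕ∞,
        ∑ x ∈ Finset.univ.filter (· ∈ Set.range ι), f x = ∑ a : V, f (ι a) := by
      intro f
      rw [← himg, Finset.sum_image (fun a _ c _ h => hinj h)]
    rw [hsplit (H.edist (ι u)), hsplit ((swapGraph H (ι u) (ι v) (ι w)).edist (ι u)), himgsum, himgsum]
    have hext_ne : ∑ x ∈ Finset.univ.filter (¬ · ∈ Set.range ι), H.edist (ι u) x ≠ ⊤ :=
      WithTop.sum_ne_top.mpr (fun x _ => hfinH x)
    have h1 : ∑ a : V, (swapGraph H (ι u) (ι v) (ι w)).edist (ι u) (ι a) ≤ ∑ a : V, (swapGraph G u v w).edist u a :=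
      Finset.sum_le_sum (fun a _ => hH'le a)
    have h2 : ∑ x ∈ Finset.univ.filter (¬ · ∈ Set.range ι), (swapGraph H (ι u) (ι v) (ι w)).edist (ι u) x ≤
        ∑ x ∈ Finset.univ.filter (¬ · ∈ Set.range ι), H.edist (ι u) x := by
      refine Finset.sum_le_sum (fun x hx => ?_)
      rcases hP x with h | h
      · refine h.trans ?_
        simp only [Finset.mem_filter] at hx
        have hxnot : x ∉ Set.range ι := hx.2
        have : ¬ H.edist (ι u) x ≤ (k : ℕ∞) := by
          intro hcon
          exact hxnot (by rw [← hrange]; exact hcon)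
        have h3k : (3 : ℕ∞) ≤ H.edist (ι u) x := le_trans k3 (le_of_not_ge this)
        exact le_trans (by norm_num) h3k
      · exact le_trans (le_add_right (le_refl _)) h
    have h3 : ∑ a : V, H.edist (ι u) (ι a) = ∑ a : V, G.edist u a :=
      Finset.sum_congr rfl (fun a _ => hHeq a)
    rw [h3]
    calc ∑ a : V, (swapGraph H (ι u) (ι v) (ι w)).edist (ι u) (ι a) +
          ∑ x ∈ Finset.univ.filter (¬ · ∈ Set.range ι), (swapGraph H (ι u) (ι v) (ι w)).edist (ι u) x
        ≤ ∑ a : V, (swapGraph G u v w).edist u a +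
          ∑ x ∈ Finset.univ.filter (¬ · ∈ Set.range ι), H.edist (ι u) x :=
          add_le_add h1 h2
      _ < ∑ a : V, G.edist u a +
          ∑ x ∈ Finset.univ.filter (¬ · ∈ Set.range ι), H.edist (ι u) x :=
          WithTop.add_lt_add_right hext_ne hsum
  · -- MAX
    have hsupH : cMax H (ι u) = Finset.univ.sup (H.edist (ι u)) :=
      (Finset.sup_univ_eq_iSup _).symm
    have hsupH' : cMax (swapGraph H (ι u) (ι v) (ι w)) (ι u) = Finset.univ.sup ((swapGraph H (ι u) (ι v) (ι w)).edist (ι u)) :=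
      (Finset.sup_univ_eq_iSup _).symm
    have hMfin : cMax H (ι u) ≠ ⊤ := by
      rw [hsupH]
      intro hcon
      have : Finset.univ.sup (H.edist (ι u)) < ⊤ := by
        rw [Finset.sup_lt_iff (by norm_num : (⊥ : ℕ∞) < ⊤)]
        exact fun x _ => lt_top_iff_ne_top.mpr (hfinH x)
      exact absurd hcon this.ne
    have h3M : (3 : ℕ∞) ≤ cMax H (ι u) := by
      have : H.edist (ι u) (ι b) = 3 := by rw [hHeq b, hb]
      calc (3 : ℕ∞) = H.edist (ι u) (ι b) := this.symm
        _ ≤ cMax H (ι u) := le_iSup _ _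
    rw [hsupH']
    rw [Finset.sup_lt_iff (lt_of_lt_of_le (by norm_num : (⊥ : ℕ∞) < 3) h3M)]
    intro x _
    rcases hP x with h | h
    · exact lt_of_le_of_lt (h.trans (by norm_num : (2:ℕ∞) ≤ 2)) (lt_of_lt_of_le (by norm_num : (2:ℕ∞) < 3) h3M)
    · have hle : H.edist (ι u) x ≤ cMax H (ι u) := le_iSup _ _
      have hne : (swapGraph H (ι u) (ι v) (ι w)).edist (ι u) x ≠ ⊤ := by
        intro hcon
        rw [hcon] at h
        simp at h
        exact hMfin (eq_top_iff.mpr (h ▸ hle))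
      have : (swapGraph H (ι u) (ι v) (ι w)).edist (ι u) x < H.edist (ι u) x := (ENat.add_one_le_iff hne).mp h
      exact lt_of_lt_of_le this hle


lemma edist_le_two' {V : Type} {G : SimpleGraph V} {a b : V}
    (h : ∃ c, G.Adj a c ∧ G.Adj c b) : G.edist a b ≤ 2 := by
  obtain ⟨c, h1, h2⟩ := h
  calc G.edist a b ≤ G.edist a c + G.edist c b := SimpleGraph.edist_triangle
    _ ≤ 1 + 1 := add_le_add (edist_le_one' h1) (edist_le_one' h2)
    _ = 2 := by norm_num

lemma edist_le_three' {V : Type} {G : SimpleGraph V} {a b : V}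
    (h : ∃ c, G.Adj a c ∧ ∃ d, G.Adj c d ∧ G.Adj d b) : G.edist a b ≤ 3 := by
  obtain ⟨c, h1, h2⟩ := h
  calc G.edist a b ≤ G.edist a c + G.edist c b := SimpleGraph.edist_triangle
    _ ≤ 1 + 2 := add_le_add (edist_le_one' h1) (edist_le_two' h2)
    _ = 3 := by norm_num

lemma two_le_edist' {V : Type} {G : SimpleGraph V} {a b : V}
    (hne : a ≠ b) (hadj : ¬ G.Adj a b) : 2 ≤ G.edist a b := by
  have h1 : 1 < G.edist a b := by
    refine lt_of_le_of_ne (Order.one_le_iff_pos.mpr (edist_pos_of_ne hne)) ?_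
    exact fun h => hadj (edist_eq_one_iff_adj.mp h.symm)
  rw [show (2:ℕ∞) = 1 + 1 by norm_num]
  exact (ENat.add_one_le_iff (by simp)).mpr h1

lemma three_le_edist' {V : Type} {G : SimpleGraph V} {a b : V}
    (hne : a ≠ b) (hadj : ¬ G.Adj a b) (h2 : ∀ c, ¬ (G.Adj a c ∧ G.Adj c b)) :
    3 ≤ G.edist a b := by
  have hge : 2 ≤ G.edist a b := two_le_edist' hne hadj
  have hne2 : G.edist a b ≠ 2 := by
    intro h
    obtain ⟨p, hp⟩ := SimpleGraph.exists_walk_of_edist_eq_coe (k := 2) (by exact_mod_cast h)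
    match p, hp with
    | .cons h1 (.cons hmid .nil), _ => exact h2 _ ⟨h1, hmid⟩
  have h1 : 2 < G.edist a b := lt_of_le_of_ne hge (Ne.symm hne2)
  rw [show (3:ℕ∞) = 2 + 1 by norm_num]
  exact (ENat.add_one_le_iff (by simp)).mpr h1

lemma edist_eq_two' {V : Type} {G : SimpleGraph V} {a b : V}
    (hne : a ≠ b) (hadj : ¬ G.Adj a b) (h : ∃ c, G.Adj a c ∧ G.Adj c b) :
    G.edist a b = 2 := le_antisymm (edist_le_two' h) (two_le_edist' hne hadj)

lemma edist_eq_three' {V : Type} {G : SimpleGraph V} {a b : V}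
    (hne : a ≠ b) (hadj : ¬ G.Adj a b) (h2 : ∀ c, ¬ (G.Adj a c ∧ G.Adj c b))
    (h : ∃ c, G.Adj a c ∧ ∃ d, G.Adj c d ∧ G.Adj d b) :
    G.edist a b = 3 := le_antisymm (edist_le_three' h) (three_le_edist' hne hadj h2)

lemma forall_edist_le_two {n : ℕ} (G : SimpleGraph (Fin n)) (u : Fin n)
    (h : ∀ a, u = a ∨ G.Adj u a ∨ ∃ c, G.Adj u c ∧ G.Adj c a) : ∀ a, G.edist u a ≤ 2 := by
  intro a
  rcases h a with rfl | h | h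
  · simp
  · exact (edist_le_one' h).trans one_le_two
  · exact edist_le_two' h

lemma forall_edist_le_three {n : ℕ} (G : SimpleGraph (Fin n)) (u : Fin n)
    (h : ∀ a, u = a ∨ G.Adj u a ∨ (∃ c, G.Adj u c ∧ G.Adj c a) ∨
      (∃ c, G.Adj u c ∧ ∃ d, G.Adj c d ∧ G.Adj d a)) : ∀ a, G.edist u a ≤ 3 := by
  intro a
  rcases h a with rfl | h | h | h
  · simp
  · exact (edist_le_one' h).trans (by norm_num)
  · exact (edist_le_two' h).trans (by norm_num)
  · exact edist_le_three' h

lemma sum12 {M : Type} [AddCommMonoid M] (f : Fin 12 → M) :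
    ∑ a, f a = f 0 + f 1 + f 2 + f 3 + f 4 + f 5 + f 6 + f 7 + f 8 + f 9 + f 10 + f 11 := by
  rw [Fin.sum_univ_castSucc, Fin.sum_univ_castSucc, Fin.sum_univ_castSucc,
    Fin.sum_univ_castSucc, Fin.sum_univ_eight]
  rfl

/-- The key lemma: local sufficient conditions for a pessimistic player to be unhappy
with respect to both the SUM-cost and the MAX-cost. -/
lemma keyLemma {n : ℕ} (G : SimpleGraph (Fin n)) (k : ℕ) (hk : 3 ≤ k) (u v w b : Fin n)
    (hval : ValidSwap G k u v w)
    (hG3 : ∀ a, G.edist u a ≤ 3)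
    (hG'2 : ∀ a, (swapGraph G u v w).edist u a ≤ 2)
    (hb : G.edist u b = 3)
    (hsum : ∑ a, (swapGraph G u v w).edist u a < ∑ a, G.edist u a) :
    UnhappySumVia G k u v w ∧ UnhappyMaxVia G k u v w :=
  ⟨⟨hval, fun _ H ι hc => (coreLemma G k hk u v w b hG3 hG'2 hb hsum H ι hc).1⟩,
   ⟨hval, fun _ H ι hc => (coreLemma G k hk u v w b hG3 hG'2 hb hsum H ι hc).2⟩⟩

/-! ### The concrete best-response cycle -/

def baseL : List (Fin 12 × Fin 12) :=
  [(0,3),(1,4),(2,5),(0,6),(1,7),(2,8),(6,4),(7,5),(8,3),(3,4),(4,5),(5,3),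
   (9,0),(10,1),(11,2),(9,2),(10,0),(11,1)]

def mkG (l : List (Fin 12 × Fin 12)) : SimpleGraph (Fin 12) where
  Adj a b := a ≠ b ∧ ((a, b) ∈ l ∨ (b, a) ∈ l)
  symm := ⟨fun _ _ h => ⟨Ne.symm h.1, Or.symm h.2⟩⟩
  loopless := ⟨fun _ h => h.1 rfl⟩

instance mkG.instDec (l : List (Fin 12 × Fin 12)) : DecidableRel (mkG l).Adj :=
  fun _ _ => inferInstanceAs (Decidable (_ ∧ _))

def G0 : SimpleGraph (Fin 12) := mkG ((0,2) :: baseL)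
def G1 : SimpleGraph (Fin 12) := mkG ((0,1) :: baseL)
def G2 : SimpleGraph (Fin 12) := mkG ((1,2) :: baseL)

instance : DecidableRel G0.Adj := mkG.instDec _
instance : DecidableRel G1.Adj := mkG.instDec _
instance : DecidableRel G2.Adj := mkG.instDec _

lemma swap0 : swapGraph G0 0 2 1 = G1 := by
  ext a b
  simp only [swapGraph, fromEdgeSet_adj, Set.mem_union, Set.mem_diff, Set.mem_singleton_iff,
    mem_edgeSet, Sym2.eq_iff]
  revert a b
  decide

lemma swap1 : swapGraph G1 1 0 2 = G2 := by
  ext a b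
  simp only [swapGraph, fromEdgeSet_adj, Set.mem_union, Set.mem_diff, Set.mem_singleton_iff,
    mem_edgeSet, Sym2.eq_iff]
  revert a b
  decide

lemma swap2 : swapGraph G2 2 1 0 = G0 := by
  ext a b
  simp only [swapGraph, fromEdgeSet_adj, Set.mem_union, Set.mem_diff, Set.mem_singleton_iff,
    mem_edgeSet, Sym2.eq_iff]
  revert a b
  decide

lemma step0 (k : ℕ) (hk : 3 ≤ k) :
    UnhappySumVia G0 k 0 2 1 ∧ UnhappyMaxVia G0 k 0 2 1 := by
  have fa0 : G0.edist 0 0 = 0 := by simp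
  have fa1 : G0.edist 0 1 = 2 := edist_eq_two' (by decide) (by decide) ⟨10, by decide, by decide⟩
  have fa2 : G0.edist 0 2 = 1 := edist_eq_one_iff_adj.mpr (by decide)
  have fa3 : G0.edist 0 3 = 1 := edist_eq_one_iff_adj.mpr (by decide)
  have fa4 : G0.edist 0 4 = 2 := edist_eq_two' (by decide) (by decide) ⟨3, by decide, by decide⟩
  have fa5 : G0.edist 0 5 = 2 := edist_eq_two' (by decide) (by decide) ⟨2, by decide, by decide⟩
  have fa6 : G0.edist 0 6 = 1 := edist_eq_one_iff_adj.mpr (by decide)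
  have fa7 : G0.edist 0 7 = 3 := edist_eq_three' (by decide) (by decide) (by decide) ⟨2, by decide, 5, by decide, by decide⟩
  have fa8 : G0.edist 0 8 = 2 := edist_eq_two' (by decide) (by decide) ⟨2, by decide, by decide⟩
  have fa9 : G0.edist 0 9 = 1 := edist_eq_one_iff_adj.mpr (by decide)
  have fa10 : G0.edist 0 10 = 1 := edist_eq_one_iff_adj.mpr (by decide)
  have fa11 : G0.edist 0 11 = 2 := edist_eq_two' (by decide) (by decide) ⟨2, by decide, by decide⟩
  have fb0 : G1.edist 0 0 = 0 := by simp
  have fb1 : G1.edist 0 1 = 1 := edist_eq_one_iff_adj.mpr (by decide)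
  have fb2 : G1.edist 0 2 = 2 := edist_eq_two' (by decide) (by decide) ⟨9, by decide, by decide⟩
  have fb3 : G1.edist 0 3 = 1 := edist_eq_one_iff_adj.mpr (by decide)
  have fb4 : G1.edist 0 4 = 2 := edist_eq_two' (by decide) (by decide) ⟨1, by decide, by decide⟩
  have fb5 : G1.edist 0 5 = 2 := edist_eq_two' (by decide) (by decide) ⟨3, by decide, by decide⟩
  have fb6 : G1.edist 0 6 = 1 := edist_eq_one_iff_adj.mpr (by decide)
  have fb7 : G1.edist 0 7 = 2 := edist_eq_two' (by decide) (by decide) ⟨1, by decide, by decide⟩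
  have fb8 : G1.edist 0 8 = 2 := edist_eq_two' (by decide) (by decide) ⟨3, by decide, by decide⟩
  have fb9 : G1.edist 0 9 = 1 := edist_eq_one_iff_adj.mpr (by decide)
  have fb10 : G1.edist 0 10 = 1 := edist_eq_one_iff_adj.mpr (by decide)
  have fb11 : G1.edist 0 11 = 2 := edist_eq_two' (by decide) (by decide) ⟨1, by decide, by decide⟩
  have hval : ValidSwap G0 k 0 2 1 := by
    refine ⟨by decide, ?_, by decide, by decide⟩
    rw [fa1]
    exact le_trans (by norm_num) (by exact_mod_cast hk : (3:ℕ∞) ≤ (k:ℕ∞))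
  have hG3 : ∀ a, G0.edist 0 a ≤ 3 :=
    forall_edist_le_three _ _ (by decide)
  have hG2 : ∀ a, G1.edist 0 a ≤ 2 :=
    forall_edist_le_two _ _ (by decide)
  have hs : ∑ a, G1.edist 0 a < ∑ a, G0.edist 0 a := by
    rw [sum12 (G1.edist 0), sum12 (G0.edist 0),
      fa0, fa1, fa2, fa3, fa4, fa5, fa6, fa7, fa8, fa9, fa10, fa11,
      fb0, fb1, fb2, fb3, fb4, fb5, fb6, fb7, fb8, fb9, fb10, fb11]
    norm_num
  have hswap := swap0
  rw [← hswap] at hG2 hs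
  exact keyLemma G0 k hk 0 2 1 7 hval hG3 hG2 fa7 hs

lemma step1 (k : ℕ) (hk : 3 ≤ k) :
    UnhappySumVia G1 k 1 0 2 ∧ UnhappyMaxVia G1 k 1 0 2 := by
  have fa0 : G1.edist 1 0 = 1 := edist_eq_one_iff_adj.mpr (by decide)
  have fa1 : G1.edist 1 1 = 0 := by simp
  have fa2 : G1.edist 1 2 = 2 := edist_eq_two' (by decide) (by decide) ⟨11, by decide, by decide⟩
  have fa3 : G1.edist 1 3 = 2 := edist_eq_two' (by decide) (by decide) ⟨0, by decide, by decide⟩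
  have fa4 : G1.edist 1 4 = 1 := edist_eq_one_iff_adj.mpr (by decide)
  have fa5 : G1.edist 1 5 = 2 := edist_eq_two' (by decide) (by decide) ⟨4, by decide, by decide⟩
  have fa6 : G1.edist 1 6 = 2 := edist_eq_two' (by decide) (by decide) ⟨0, by decide, by decide⟩
  have fa7 : G1.edist 1 7 = 1 := edist_eq_one_iff_adj.mpr (by decide)
  have fa8 : G1.edist 1 8 = 3 := edist_eq_three' (by decide) (by decide) (by decide) ⟨0, by decide, 3, by decide, by decide⟩
  have fa9 : G1.edist 1 9 = 2 := edist_eq_two' (by decide) (by decide) ⟨0, by decide, by decide⟩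
  have fa10 : G1.edist 1 10 = 1 := edist_eq_one_iff_adj.mpr (by decide)
  have fa11 : G1.edist 1 11 = 1 := edist_eq_one_iff_adj.mpr (by decide)
  have fb0 : G2.edist 1 0 = 2 := edist_eq_two' (by decide) (by decide) ⟨10, by decide, by decide⟩
  have fb1 : G2.edist 1 1 = 0 := by simp
  have fb2 : G2.edist 1 2 = 1 := edist_eq_one_iff_adj.mpr (by decide)
  have fb3 : G2.edist 1 3 = 2 := edist_eq_two' (by decide) (by decide) ⟨4, by decide, by decide⟩
  have fb4 : G2.edist 1 4 = 1 := edist_eq_one_iff_adj.mpr (by decide)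
  have fb5 : G2.edist 1 5 = 2 := edist_eq_two' (by decide) (by decide) ⟨2, by decide, by decide⟩
  have fb6 : G2.edist 1 6 = 2 := edist_eq_two' (by decide) (by decide) ⟨4, by decide, by decide⟩
  have fb7 : G2.edist 1 7 = 1 := edist_eq_one_iff_adj.mpr (by decide)
  have fb8 : G2.edist 1 8 = 2 := edist_eq_two' (by decide) (by decide) ⟨2, by decide, by decide⟩
  have fb9 : G2.edist 1 9 = 2 := edist_eq_two' (by decide) (by decide) ⟨2, by decide, by decide⟩
  have fb10 : G2.edist 1 10 = 1 := edist_eq_one_iff_adj.mpr (by decide)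
  have fb11 : G2.edist 1 11 = 1 := edist_eq_one_iff_adj.mpr (by decide)
  have hval : ValidSwap G1 k 1 0 2 := by
    refine ⟨by decide, ?_, by decide, by decide⟩
    rw [fa2]
    exact le_trans (by norm_num) (by exact_mod_cast hk : (3:ℕ∞) ≤ (k:ℕ∞))
  have hG3 : ∀ a, G1.edist 1 a ≤ 3 :=
    forall_edist_le_three _ _ (by decide)
  have hG2 : ∀ a, G2.edist 1 a ≤ 2 :=
    forall_edist_le_two _ _ (by decide)
  have hs : ∑ a, G2.edist 1 a < ∑ a, G1.edist 1 a := by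
    rw [sum12 (G2.edist 1), sum12 (G1.edist 1),
      fa0, fa1, fa2, fa3, fa4, fa5, fa6, fa7, fa8, fa9, fa10, fa11,
      fb0, fb1, fb2, fb3, fb4, fb5, fb6, fb7, fb8, fb9, fb10, fb11]
    norm_num
  have hswap := swap1
  rw [← hswap] at hG2 hs
  exact keyLemma G1 k hk 1 0 2 8 hval hG3 hG2 fa8 hs

lemma step2 (k : ℕ) (hk : 3 ≤ k) :
    UnhappySumVia G2 k 2 1 0 ∧ UnhappyMaxVia G2 k 2 1 0 := by
  have fa0 : G2.edist 2 0 = 2 := edist_eq_two' (by decide) (by decide) ⟨9, by decide, by decide⟩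
  have fa1 : G2.edist 2 1 = 1 := edist_eq_one_iff_adj.mpr (by decide)
  have fa2 : G2.edist 2 2 = 0 := by simp
  have fa3 : G2.edist 2 3 = 2 := edist_eq_two' (by decide) (by decide) ⟨5, by decide, by decide⟩
  have fa4 : G2.edist 2 4 = 2 := edist_eq_two' (by decide) (by decide) ⟨1, by decide, by decide⟩
  have fa5 : G2.edist 2 5 = 1 := edist_eq_one_iff_adj.mpr (by decide)
  have fa6 : G2.edist 2 6 = 3 := edist_eq_three' (by decide) (by decide) (by decide) ⟨1, by decide, 4, by decide, by decide⟩
  have fa7 : G2.edist 2 7 = 2 := edist_eq_two' (by decide) (by decide) ⟨1, by decide, by decide⟩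
  have fa8 : G2.edist 2 8 = 1 := edist_eq_one_iff_adj.mpr (by decide)
  have fa9 : G2.edist 2 9 = 1 := edist_eq_one_iff_adj.mpr (by decide)
  have fa10 : G2.edist 2 10 = 2 := edist_eq_two' (by decide) (by decide) ⟨1, by decide, by decide⟩
  have fa11 : G2.edist 2 11 = 1 := edist_eq_one_iff_adj.mpr (by decide)
  have fb0 : G0.edist 2 0 = 1 := edist_eq_one_iff_adj.mpr (by decide)
  have fb1 : G0.edist 2 1 = 2 := edist_eq_two' (by decide) (by decide) ⟨11, by decide, by decide⟩
  have fb2 : G0.edist 2 2 = 0 := by simp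
  have fb3 : G0.edist 2 3 = 2 := edist_eq_two' (by decide) (by decide) ⟨0, by decide, by decide⟩
  have fb4 : G0.edist 2 4 = 2 := edist_eq_two' (by decide) (by decide) ⟨5, by decide, by decide⟩
  have fb5 : G0.edist 2 5 = 1 := edist_eq_one_iff_adj.mpr (by decide)
  have fb6 : G0.edist 2 6 = 2 := edist_eq_two' (by decide) (by decide) ⟨0, by decide, by decide⟩
  have fb7 : G0.edist 2 7 = 2 := edist_eq_two' (by decide) (by decide) ⟨5, by decide, by decide⟩
  have fb8 : G0.edist 2 8 = 1 := edist_eq_one_iff_adj.mpr (by decide)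
  have fb9 : G0.edist 2 9 = 1 := edist_eq_one_iff_adj.mpr (by decide)
  have fb10 : G0.edist 2 10 = 2 := edist_eq_two' (by decide) (by decide) ⟨0, by decide, by decide⟩
  have fb11 : G0.edist 2 11 = 1 := edist_eq_one_iff_adj.mpr (by decide)
  have hval : ValidSwap G2 k 2 1 0 := by
    refine ⟨by decide, ?_, by decide, by decide⟩
    rw [fa0]
    exact le_trans (by norm_num) (by exact_mod_cast hk : (3:ℕ∞) ≤ (k:ℕ∞))
  have hG3 : ∀ a, G2.edist 2 a ≤ 3 :=
    forall_edist_le_three _ _ (by decide)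
  have hG2 : ∀ a, G0.edist 2 a ≤ 2 :=
    forall_edist_le_two _ _ (by decide)
  have hs : ∑ a, G0.edist 2 a < ∑ a, G2.edist 2 a := by
    rw [sum12 (G0.edist 2), sum12 (G2.edist 2),
      fa0, fa1, fa2, fa3, fa4, fa5, fa6, fa7, fa8, fa9, fa10, fa11,
      fb0, fb1, fb2, fb3, fb4, fb5, fb6, fb7, fb8, fb9, fb10, fb11]
    norm_num
  have hswap := swap2
  rw [← hswap] at hG2 hs
  exact keyLemma G2 k hk 2 1 0 6 hval hG3 hG2 fa6 hs


lemma G0conn : G0.Connected := by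
  have hG3 : ∀ a, G0.edist 0 a ≤ 3 := forall_edist_le_three _ _ (by decide)
  rw [connected_iff]
  refine ⟨fun a b => ?_, ⟨0⟩⟩
  have hr : ∀ a : Fin 12, G0.Reachable 0 a := by
    intro a
    refine reachable_of_edist_ne_top (fun h => ?_)
    have := hG3 a
    rw [h] at this
    simp at this
  exact (hr a).symm.trans (hr b)

def Gs : ℕ → SimpleGraph (Fin 12) := fun t =>
  match t % 3 with
  | 0 => G0
  | 1 => G1
  | _ => G2


theorem stmt2 (k : ℕ) (hk : 3 ≤ k) :
    (∃ (n T : ℕ) (Gs : ℕ → SimpleGraph (Fin n)),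
      1 ≤ T ∧ (Gs 0).Connected ∧ Gs T = Gs 0 ∧
      ∀ t < T, ∃ u v w, UnhappySumVia (Gs t) k u v w ∧
        Gs (t + 1) = swapGraph (Gs t) u v w) ∧
    (∃ (n T : ℕ) (Gs : ℕ → SimpleGraph (Fin n)),
      1 ≤ T ∧ (Gs 0).Connected ∧ Gs T = Gs 0 ∧
      ∀ t < T, ∃ u v w, UnhappyMaxVia (Gs t) k u v w ∧
        Gs (t + 1) = swapGraph (Gs t) u v w) := by
  constructor
  · refine ⟨12, 3, Gs, by norm_num, G0conn, rfl, ?_⟩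
    intro t ht
    interval_cases t
    · exact ⟨0, 2, 1, (step0 k hk).1, swap0.symm⟩
    · exact ⟨1, 0, 2, (step1 k hk).1, swap1.symm⟩
    · exact ⟨2, 1, 0, (step2 k hk).1, swap2.symm⟩
  · refine ⟨12, 3, Gs, by norm_num, G0conn, rfl, ?_⟩
    intro t ht
    interval_cases t
    · exact ⟨0, 2, 1, (step0 k hk).2, swap0.symm⟩
    · exact ⟨1, 0, 2, (step1 k hk).2, swap1.symm⟩
    · exact ⟨2, 1, 0, (step2 k hk).2, swap2.symm⟩

end SwapGame
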